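/- (Proposition 1, monotonicity form) Let X be a real random variable with finite fourth moment, variance σ²(X) > 0, and strictly positive excess kurtosis κ(X) > 0. For σ > 0 let N_σ be independent of X with Gaussian law N(0, σ²) and set Y_σ = X + N_σ. Then the excess kurtosis of the noisy observation is strictly monotone in the noise level: for 0 < σ₁ < σ₂ one has 0 < κ(Y_{σ₂}) < κ(Y_{σ₁}) < κ(X). Equivalently, κ(Y_σ) = κ(X)·(1 − 1/SNR(Y_σ))² is strictly increasing in the signal-to-noise ratio SNR(Y_σ) = σ²(Y_σ)/σ², so higher projection kurtosis of the noisy variable corresponds to higher SNR. -/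

import Mathlib

open MeasureTheory ProbabilityTheory

/-- Excess kurtosis of a real random variable `X` under a measure `P`: the fourth central
moment divided by the squared variance, minus 3. -/
noncomputable def kurtRV {Ω : Type*} [MeasurableSpace Ω] (X : Ω → ℝ) (P : Measure Ω) : ℝ :=
  centralMoment X 4 P / (variance X P) ^ 2 - 3

open Real Set
open scoped NNReal ENNReal

section AuxGauss

lemma integral_gaussianReal_eq (s : ℝ≥0) (hs : s ≠ 0) (g : ℝ → ℝ) :
    ∫ x, g x ∂(gaussianReal 0 s) = ∫ x, gaussianPDFReal 0 s x * g x := by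
  rw [gaussianReal_of_var_ne_zero 0 hs]
  have h : gaussianPDF 0 s = fun x => ((Real.toNNReal (gaussianPDFReal 0 s x) : ℝ≥0) : ℝ≥0∞) := by
    ext x; simp [gaussianPDF, ENNReal.ofReal]
  rw [h, integral_withDensity_eq_integral_smul
    ((measurable_gaussianPDFReal 0 s).real_toNNReal) g]
  congr 1
  ext x
  rw [NNReal.smul_def, Real.coe_toNNReal _ (gaussianPDFReal_nonneg 0 s x), smul_eq_mul]

lemma gaussianPDFReal_zero_mean (s : ℝ≥0) (x : ℝ) :
    gaussianPDFReal 0 s x = (√(2 * π * s))⁻¹ * rexp (-((2 * (s:ℝ))⁻¹) * x ^ 2) := by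
  rw [gaussianPDFReal]
  congr 1
  rw [sub_zero]
  ring_nf

lemma int_odd (b : ℝ) (n : ℕ) (hn : Odd n) :
    ∫ x : ℝ, x ^ n * rexp (-b * x ^ 2) = 0 := by
  have h := integral_neg_eq_self (fun x : ℝ => x ^ n * rexp (-b * x ^ 2)) volume
  simp only [hn.neg_pow, neg_sq, neg_mul] at h
  rw [integral_neg] at h
  simp only [neg_mul] at h ⊢
  linarith

lemma int_even (b : ℝ) (hb : 0 < b) (n : ℕ) (hn : Even n) :
    ∫ x : ℝ, x ^ n * rexp (-b * x ^ 2)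
      = 2 * (b ^ (-((n : ℝ) + 1) / 2) * (1 / 2) * Gamma (((n : ℝ) + 1) / 2)) := by
  have h1 : (fun x : ℝ => x ^ n * rexp (-b * x ^ 2))
      = (fun x : ℝ => (fun y : ℝ => y ^ n * rexp (-b * y ^ 2)) |x|) := by
    funext x
    simp only [hn.pow_abs, sq_abs]
  calc ∫ x : ℝ, x ^ n * rexp (-b * x ^ 2)
      = ∫ x : ℝ, (fun y : ℝ => y ^ n * rexp (-b * y ^ 2)) |x| :=
        integral_congr_ae (Filter.Eventually.of_forall fun x => by
          simp only [hn.pow_abs, sq_abs])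
    _ = 2 * ∫ x in Ioi (0:ℝ), x ^ n * rexp (-b * x ^ 2) :=
        integral_comp_abs (f := fun y : ℝ => y ^ n * rexp (-b * y ^ 2))
    _ = 2 * ∫ x in Ioi (0:ℝ), x ^ ((n : ℕ) : ℝ) * rexp (-b * x ^ ((2:ℕ) : ℝ)) := by
        congr 1
        refine setIntegral_congr_fun measurableSet_Ioi fun x hx => ?_
        rw [rpow_natCast, rpow_natCast]
    _ = 2 * (b ^ (-((n : ℝ) + 1) / 2) * (1 / 2) * Gamma (((n : ℝ) + 1) / 2)) := by
        rw [integral_rpow_mul_exp_neg_mul_rpow (by norm_num : (0:ℝ) < ((2:ℕ):ℝ))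
          (lt_of_lt_of_le (by norm_num) (Nat.cast_nonneg n)) hb]
        norm_num

lemma gaussianPDFReal_zero_eq (s : ℝ≥0) (x : ℝ) :
    gaussianPDFReal 0 s x = (√(2 * π * s))⁻¹ * rexp (-(2 * (s:ℝ))⁻¹ * x ^ 2) := by
  rw [gaussianPDFReal]
  congr 1
  rw [sub_zero]
  ring_nf

lemma gauss_pow_eq (s : ℝ≥0) (hs : s ≠ 0) (n : ℕ) :
    ∫ x, x ^ n ∂(gaussianReal 0 s)
      = (√(2 * π * s))⁻¹ * ∫ x : ℝ, x ^ n * rexp (-(2 * (s:ℝ))⁻¹ * x ^ 2) := by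
  rw [integral_gaussianReal_eq s hs]
  rw [← integral_const_mul]
  congr 1
  funext x
  rw [gaussianPDFReal_zero_eq]
  ring

lemma gauss_odd (s : ℝ≥0) (hs : s ≠ 0) (n : ℕ) (hn : Odd n) :
    ∫ x, x ^ n ∂(gaussianReal 0 s) = 0 := by
  rw [gauss_pow_eq s hs, int_odd _ _ hn, mul_zero]

lemma sqrt_two_pi_s (s : ℝ≥0) (hs : s ≠ 0) :
    √(2 * π * s) = (2 * (s:ℝ)) ^ ((1:ℝ)/2) * √π := by
  have h1 : (0:ℝ) < 2 * (s:ℝ) := by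
    have : (0:ℝ) < (s:ℝ) := by positivity -- wrong, need s ≠ 0
    linarith
  rw [show 2 * π * (s:ℝ) = (2 * (s:ℝ)) * π by ring, sqrt_mul h1.le, sqrt_eq_rpow]

lemma gauss_two (s : ℝ≥0) (hs : s ≠ 0) :
    ∫ x, x ^ 2 ∂(gaussianReal 0 s) = s := by
  have hsp : (0:ℝ) < (s:ℝ) := by
    exact_mod_cast pos_iff_ne_zero.mpr hs
  have ht : (0:ℝ) < 2 * (s:ℝ) := by linarith
  have hb : (0:ℝ) < (2 * (s:ℝ))⁻¹ := by positivity
  rw [gauss_pow_eq s hs, int_even _ hb 2 (by norm_num)]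
  have h32 : (((2:ℕ):ℝ) + 1) / 2 = 1/2 + 1 := by norm_num
  have hG : Gamma ((((2:ℕ):ℝ) + 1) / 2) = 1/2 * √π := by
    rw [h32, Gamma_add_one (by norm_num), Gamma_one_half_eq]
  have hbpow : ((2 * (s:ℝ))⁻¹) ^ (-(((2:ℕ):ℝ) + 1) / 2)
      = (2 * (s:ℝ)) ^ ((1:ℝ)/2) * (2 * (s:ℝ)) := by
    rw [show (-(((2:ℕ):ℝ) + 1) / 2) = -((3:ℝ)/2) by norm_num, inv_rpow ht.le,
      rpow_neg ht.le, inv_inv, show ((3:ℝ)/2) = 1/2 + 1 by norm_num, rpow_add ht, rpow_one]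
  rw [hG, hbpow, sqrt_two_pi_s s hs]
  have hA : (0:ℝ) < (2 * (s:ℝ)) ^ ((1:ℝ)/2) := rpow_pos_of_pos ht _
  have hpi : (0:ℝ) < √π := sqrt_pos.mpr pi_pos
  field_simp

lemma gauss_four (s : ℝ≥0) (hs : s ≠ 0) :
    ∫ x, x ^ 4 ∂(gaussianReal 0 s) = 3 * (s:ℝ) ^ 2 := by
  have hsp : (0:ℝ) < (s:ℝ) := by
    exact_mod_cast pos_iff_ne_zero.mpr hs
  have ht : (0:ℝ) < 2 * (s:ℝ) := by linarith
  have hb : (0:ℝ) < (2 * (s:ℝ))⁻¹ := by positivity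
  rw [gauss_pow_eq s hs, int_even _ hb 4 (by decide)]
  have hG : Gamma ((((4:ℕ):ℝ) + 1) / 2) = 3/2 * (1/2 * √π) := by
    rw [show ((((4:ℕ):ℝ) + 1) / 2) = 3/2 + 1 by norm_num, Gamma_add_one (by norm_num),
      show ((3:ℝ)/2) = 1/2 + 1 by norm_num, Gamma_add_one (by norm_num), Gamma_one_half_eq]
  have hbpow : ((2 * (s:ℝ))⁻¹) ^ (-(((4:ℕ):ℝ) + 1) / 2)
      = (2 * (s:ℝ)) ^ ((1:ℝ)/2) * ((2 * (s:ℝ)) * (2 * (s:ℝ))) := by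
    rw [show (-(((4:ℕ):ℝ) + 1) / 2) = -((5:ℝ)/2) by norm_num, inv_rpow ht.le,
      rpow_neg ht.le, inv_inv, show ((5:ℝ)/2) = 1/2 + 1 + 1 by norm_num, rpow_add ht,
      rpow_add ht, rpow_one, mul_assoc]
  rw [hG, hbpow, sqrt_two_pi_s s hs]
  have hA : (0:ℝ) < (2 * (s:ℝ)) ^ ((1:ℝ)/2) := rpow_pos_of_pos ht _
  have hpi : (0:ℝ) < √π := sqrt_pos.mpr pi_pos
  field_simp

lemma integrable_pow_gauss (s : ℝ≥0) (hs : s ≠ 0) (n : ℕ) :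
    Integrable (fun x : ℝ => x ^ n) (gaussianReal 0 s) := by
  have hsp : (0:ℝ) < (s:ℝ) := by exact_mod_cast pos_iff_ne_zero.mpr hs
  have hb : (0:ℝ) < (2 * (s:ℝ))⁻¹ := by positivity
  rw [gaussianReal_of_var_ne_zero 0 hs]
  have h : gaussianPDF 0 s = fun x => ((Real.toNNReal (gaussianPDFReal 0 s x) : ℝ≥0) : ℝ≥0∞) := by
    funext x; simp [gaussianPDF, ENNReal.ofReal]
  rw [h, integrable_withDensity_iff_integrable_coe_smul
    ((measurable_gaussianPDFReal 0 s).real_toNNReal)]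
  have : (fun x : ℝ => ((Real.toNNReal (gaussianPDFReal 0 s x) : ℝ)) • x ^ n)
      = fun x : ℝ => (√(2 * π * s))⁻¹ * (x ^ ((n:ℕ):ℝ) * rexp (-(2 * (s:ℝ))⁻¹ * x ^ 2)) := by
    funext x
    rw [smul_eq_mul, Real.coe_toNNReal _ (gaussianPDFReal_nonneg 0 s x),
      gaussianPDFReal, rpow_natCast, sub_zero]
    ring_nf
  rw [this]
  exact (integrable_rpow_mul_exp_neg_mul_sq hb
    (lt_of_lt_of_le (by norm_num) (Nat.cast_nonneg n))).const_mul _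

end AuxGauss

section AuxProb

variable {Ω : Type*} [MeasurableSpace Ω] {P : Measure Ω} [IsProbabilityMeasure P]

lemma memLp4_of_map_gauss {N : Ω → ℝ} (hN : Measurable N) {s : ℝ≥0} (hs : s ≠ 0)
    (hmap : P.map N = gaussianReal 0 s) : MemLp N 4 P := by
  have h4 : MemLp (id : ℝ → ℝ) 4 (gaussianReal 0 s) := by
    have hi : Integrable (fun x : ℝ => ‖(id : ℝ → ℝ) x‖ ^ ((4:ℝ≥0∞).toReal))
        (gaussianReal 0 s) := by
      have h := integrable_pow_gauss s hs 4
      refine h.congr ?_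
      filter_upwards with x
      rw [show ((4:ℝ≥0∞).toReal) = ((4:ℕ):ℝ) by norm_num, rpow_natCast, id_eq,
        norm_eq_abs, ← abs_pow, abs_of_nonneg (by positivity)]
    have h1 : MemLp (fun x : ℝ => ‖(id : ℝ → ℝ) x‖ ^ ((4:ℝ≥0∞).toReal))
        ((4:ℝ≥0∞)/4) (gaussianReal 0 s) := by
      rw [ENNReal.div_self (by norm_num) (by norm_num), memLp_one_iff_integrable]
      exact hi
    exact (memLp_norm_rpow_iff (q := 4) (p := 4) aestronglyMeasurable_id
      (by norm_num) (by norm_num)).mp h1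
  have := (memLp_map_measure_iff (aestronglyMeasurable_id) hN.aemeasurable).mp
    (by rw [hmap]; exact h4)
  exact this

lemma integral_pow_of_map_gauss {N : Ω → ℝ} (hN : Measurable N) {s : ℝ≥0}
    (hmap : P.map N = gaussianReal 0 s) (n : ℕ) :
    ∫ ω, N ω ^ n ∂P = ∫ x, x ^ n ∂(gaussianReal 0 s) := by
  rw [← hmap]
  exact (integral_map hN.aemeasurable ((measurable_id.pow_const n).aestronglyMeasurable)).symm

lemma integrable_pow_of_memLp4 {f : Ω → ℝ} (hf : MemLp f 4 P) {k : ℕ}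
    (hk : 1 ≤ k) (hk4 : k ≤ 4) : Integrable (fun ω => f ω ^ k) P := by
  have hle : (k : ℝ≥0∞) ≤ 4 := by exact_mod_cast hk4
  have h1 : MemLp f k P := hf.mono_exponent hle
  have h2 := h1.integrable_norm_rpow (by exact_mod_cast (Nat.pos_of_ne_zero (by omega)).ne')
    (by simp)
  refine h2.mono' ?_ ?_
  · exact (h1.aestronglyMeasurable.aemeasurable.pow_const k).aestronglyMeasurable
  · filter_upwards with ω
    rw [show ((k:ℝ≥0∞).toReal) = ((k:ℕ):ℝ) by simp, norm_pow, ← rpow_natCast ‖f ω‖ k]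

lemma kurt_add_gauss (X : Ω → ℝ) (hX4 : MemLp X 4 P) (hvar : 0 < variance X P)
    {σ : ℝ} (hσ : 0 < σ) {N : Ω → ℝ} (hN : Measurable N)
    (hmap : P.map N = gaussianReal 0 (σ ^ 2).toNNReal) (hindep : IndepFun X N P) :
    kurtRV (X + N) P
      = kurtRV X P * (variance X P / (variance X P + σ ^ 2)) ^ 2 := by
  set s : ℝ≥0 := (σ ^ 2).toNNReal with hs_def
  have hσ2 : (0:ℝ) < σ ^ 2 := by positivity
  have hs : s ≠ 0 := by
    simp only [hs_def, ne_eq, Real.toNNReal_eq_zero, not_le]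
    exact hσ2
  have hsc : (s:ℝ) = σ ^ 2 := Real.coe_toNNReal _ hσ2.le
  have hN4 : MemLp N 4 P := memLp4_of_map_gauss hN hs hmap
  have hN2 : MemLp N 2 P := hN4.mono_exponent (by norm_num)
  have hX2 : MemLp X 2 P := hX4.mono_exponent (by norm_num)
  have EN1 : ∫ ω, N ω ^ 1 ∂P = 0 := by
    rw [integral_pow_of_map_gauss hN hmap 1, gauss_odd s hs 1 (by decide)]
  have EN2 : ∫ ω, N ω ^ 2 ∂P = σ ^ 2 := by
    rw [integral_pow_of_map_gauss hN hmap 2, gauss_two s hs, hsc]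
  have EN3 : ∫ ω, N ω ^ 3 ∂P = 0 := by
    rw [integral_pow_of_map_gauss hN hmap 3, gauss_odd s hs 3 (by decide)]
  have EN4 : ∫ ω, N ω ^ 4 ∂P = 3 * σ ^ 4 := by
    rw [integral_pow_of_map_gauss hN hmap 4, gauss_four s hs, hsc]; ring
  set m := ∫ ω, X ω ∂P with hm
  set Z : Ω → ℝ := fun ω => X ω - m with hZdef
  have hZ4 : MemLp Z 4 P := hX4.sub (memLp_const m)
  have hiZ : IndepFun Z N P :=
    hindep.comp (measurable_id.sub measurable_const) measurable_id
  have hiZN : ∀ k j : ℕ, IndepFun (fun ω => Z ω ^ k) (fun ω => N ω ^ j) P :=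
    fun k j => hiZ.comp (measurable_id.pow_const k) (measurable_id.pow_const j)
  have iZ : ∀ k : ℕ, 1 ≤ k → k ≤ 4 → Integrable (fun ω => Z ω ^ k) P :=
    fun k h1 h2 => integrable_pow_of_memLp4 hZ4 h1 h2
  have iN : ∀ k : ℕ, 1 ≤ k → k ≤ 4 → Integrable (fun ω => N ω ^ k) P :=
    fun k h1 h2 => integrable_pow_of_memLp4 hN4 h1 h2
  have iZN : ∀ k j : ℕ, 1 ≤ k → k ≤ 4 → 1 ≤ j → j ≤ 4 →
      Integrable (fun ω => Z ω ^ k * N ω ^ j) P :=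
    fun k j hk1 hk4 hj1 hj4 => (hiZN k j).integrable_mul (iZ k hk1 hk4) (iN j hj1 hj4)
  have EZN : ∀ k j : ℕ, 1 ≤ k → k ≤ 4 → 1 ≤ j → j ≤ 4 →
      ∫ ω, Z ω ^ k * N ω ^ j ∂P = (∫ ω, Z ω ^ k ∂P) * ∫ ω, N ω ^ j ∂P :=
    fun k j hk1 hk4 hj1 hj4 =>
      (hiZN k j).integral_fun_mul_eq_mul_integral (iZ k hk1 hk4).aestronglyMeasurable
          (iN j hj1 hj4).aestronglyMeasurable
  have EXN : ∫ ω, (X + N) ω ∂P = m := by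
    simp only [Pi.add_apply]
    rw [integral_add (hX4.integrable (by norm_num)) (hN4.integrable (by norm_num))]
    have : ∫ ω, N ω ∂P = 0 := by simpa [pow_one] using EN1
    rw [this, hm, add_zero]
  have vN : variance N P = σ ^ 2 := by
    rw [variance_eq_sub hN2]
    simp only [Pi.pow_apply]
    rw [EN2]
    have : ∫ ω, N ω ∂P = 0 := by simpa [pow_one] using EN1
    rw [this]
    ring
  have vXN : variance (X + N) P = variance X P + σ ^ 2 := by
    rw [hindep.variance_add hX2 hN2, vN]
  have vX : variance X P = ∫ ω, Z ω ^ 2 ∂P := by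
    rw [variance_eq_integral hX2.aestronglyMeasurable.aemeasurable]
  have cX : centralMoment X 4 P = ∫ ω, Z ω ^ 4 ∂P := rfl
  have cXN : centralMoment (X + N) 4 P = ∫ ω, (Z ω + N ω) ^ 4 ∂P := by
    have h0 : centralMoment (X + N) 4 P
        = ∫ ω, ((X + N) ω - ∫ x, (X + N) x ∂P) ^ 4 ∂P := rfl
    rw [h0]
    refine integral_congr_ae (Filter.Eventually.of_forall fun ω => ?_)
    rw [EXN]
    simp only [Pi.add_apply, hZdef]
    ring
  have expand : ∫ ω, (Z ω + N ω) ^ 4 ∂P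
      = (∫ ω, Z ω ^ 4 ∂P) + 6 * (∫ ω, Z ω ^ 2 ∂P) * σ ^ 2 + 3 * σ ^ 4 := by
    have e : (fun ω => (Z ω + N ω) ^ 4) = fun ω =>
        Z ω ^ 4 + (4 * (Z ω ^ 3 * N ω ^ 1) + (6 * (Z ω ^ 2 * N ω ^ 2)
          + (4 * (Z ω ^ 1 * N ω ^ 3) + N ω ^ 4))) := by
      funext ω; ring
    have i31 := iZN 3 1 (by norm_num) (by norm_num) (by norm_num) (by norm_num)
    have i22 := iZN 2 2 (by norm_num) (by norm_num) (by norm_num) (by norm_num)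
    have i13 := iZN 1 3 (by norm_num) (by norm_num) (by norm_num) (by norm_num)
    have i04 := iN 4 (by norm_num) (by norm_num)
    have i40 := iZ 4 (by norm_num) (by norm_num)
    have step1 : ∫ ω, (Z ω ^ 4 + (4 * (Z ω ^ 3 * N ω ^ 1) + (6 * (Z ω ^ 2 * N ω ^ 2)
          + (4 * (Z ω ^ 1 * N ω ^ 3) + N ω ^ 4)))) ∂P
        = (∫ ω, Z ω ^ 4 ∂P) + ∫ ω, (4 * (Z ω ^ 3 * N ω ^ 1) + (6 * (Z ω ^ 2 * N ω ^ 2)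
          + (4 * (Z ω ^ 1 * N ω ^ 3) + N ω ^ 4))) ∂P :=
      integral_add i40 ((i31.const_mul 4).add ((i22.const_mul 6).add
        ((i13.const_mul 4).add i04)))
    have step2 : ∫ ω, (4 * (Z ω ^ 3 * N ω ^ 1) + (6 * (Z ω ^ 2 * N ω ^ 2)
          + (4 * (Z ω ^ 1 * N ω ^ 3) + N ω ^ 4))) ∂P
        = (∫ ω, 4 * (Z ω ^ 3 * N ω ^ 1) ∂P) + ∫ ω, (6 * (Z ω ^ 2 * N ω ^ 2)
          + (4 * (Z ω ^ 1 * N ω ^ 3) + N ω ^ 4)) ∂P :=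
      integral_add (i31.const_mul 4) ((i22.const_mul 6).add ((i13.const_mul 4).add i04))
    have step3 : ∫ ω, (6 * (Z ω ^ 2 * N ω ^ 2) + (4 * (Z ω ^ 1 * N ω ^ 3) + N ω ^ 4)) ∂P
        = (∫ ω, 6 * (Z ω ^ 2 * N ω ^ 2) ∂P) + ∫ ω, (4 * (Z ω ^ 1 * N ω ^ 3) + N ω ^ 4) ∂P :=
      integral_add (i22.const_mul 6) ((i13.const_mul 4).add i04)
    have step4 : ∫ ω, (4 * (Z ω ^ 1 * N ω ^ 3) + N ω ^ 4) ∂P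
        = (∫ ω, 4 * (Z ω ^ 1 * N ω ^ 3) ∂P) + ∫ ω, N ω ^ 4 ∂P :=
      integral_add (i13.const_mul 4) i04
    rw [e, step1, step2, step3, step4,
      integral_const_mul, integral_const_mul, integral_const_mul,
      EZN 3 1 (by norm_num) (by norm_num) (by norm_num) (by norm_num),
      EZN 2 2 (by norm_num) (by norm_num) (by norm_num) (by norm_num),
      EZN 1 3 (by norm_num) (by norm_num) (by norm_num) (by norm_num),
      EN1, EN2, EN3, EN4]
    ring
  have hv : (0:ℝ) < variance X P := hvar
  have hvs : (0:ℝ) < variance X P + σ ^ 2 := by linarith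
  rw [kurtRV, kurtRV, cXN, expand, vXN, cX, ← vX]
  field_simp
  ring

end AuxProb

/-- Proposition 1 (monotonicity form): if `X` has finite fourth moment, positive variance
and strictly positive excess kurtosis, and `Y_σ = X + N_σ` with `N_σ` independent Gaussian
noise of law `N(0, σ²)`, then the excess kurtosis of the noisy observation is strictly
monotone in the noise level: for `0 < σ₁ < σ₂` one has
`0 < κ(Y_{σ₂}) < κ(Y_{σ₁}) < κ(X)`. Equivalently, `κ(X)·(1 − 1/r)²` is strictly
increasing in the signal-to-noise ratio `r ≥ 1`, so higher kurtosis of the noisy variable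
corresponds to higher SNR. -/
theorem kurtosis_strictly_monotone_in_noise
    {Ω : Type*} [MeasurableSpace Ω] (P : Measure Ω) [IsProbabilityMeasure P]
    (X : Ω → ℝ) (hX4 : MemLp X 4 P)
    (hvar : 0 < variance X P) (hkurt : 0 < kurtRV X P)
    (σ₁ σ₂ : ℝ) (hσ₁ : 0 < σ₁) (hσ₁₂ : σ₁ < σ₂)
    (N₁ N₂ : Ω → ℝ) (hN₁ : Measurable N₁) (hN₂ : Measurable N₂)
    (hmap₁ : P.map N₁ = (gaussianReal 0 (σ₁ ^ 2).toNNReal : Measure ℝ))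
    (hmap₂ : P.map N₂ = (gaussianReal 0 (σ₂ ^ 2).toNNReal : Measure ℝ))
    (hindep₁ : IndepFun X N₁ P) (hindep₂ : IndepFun X N₂ P) :
    (0 < kurtRV (X + N₂) P ∧
      kurtRV (X + N₂) P < kurtRV (X + N₁) P ∧
      kurtRV (X + N₁) P < kurtRV X P) ∧
    (∀ r₁ r₂ : ℝ, 1 ≤ r₁ → r₁ < r₂ →
      kurtRV X P * (1 - 1 / r₁) ^ 2 < kurtRV X P * (1 - 1 / r₂) ^ 2) := by
  have hσ₂ : 0 < σ₂ := hσ₁.trans hσ₁₂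
  set v := variance X P with hv
  set κ := kurtRV X P with hκ
  have h1 : kurtRV (X + N₁) P = κ * (v / (v + σ₁ ^ 2)) ^ 2 :=
    kurt_add_gauss X hX4 hvar hσ₁ hN₁ hmap₁ hindep₁
  have h2 : kurtRV (X + N₂) P = κ * (v / (v + σ₂ ^ 2)) ^ 2 :=
    kurt_add_gauss X hX4 hvar hσ₂ hN₂ hmap₂ hindep₂
  have hd1 : 0 < v + σ₁ ^ 2 := by positivity
  have hd2 : 0 < v + σ₂ ^ 2 := by positivity
  have hq2pos : 0 < v / (v + σ₂ ^ 2) := div_pos hvar hd2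
  constructor
  · refine ⟨?_, ?_, ?_⟩
    · rw [h2]
      exact mul_pos hkurt (pow_pos hq2pos 2)
    · rw [h1, h2]
      refine mul_lt_mul_of_pos_left ?_ hkurt
      have hσsq : σ₁ ^ 2 < σ₂ ^ 2 := by nlinarith
      have hlt : v / (v + σ₂ ^ 2) < v / (v + σ₁ ^ 2) :=
        div_lt_div_of_pos_left hvar hd1 (by linarith)
      exact pow_lt_pow_left₀ hlt hq2pos.le (by norm_num)
    · rw [h1]
      have hlt1 : v / (v + σ₁ ^ 2) < 1 := (div_lt_one hd1).mpr (by nlinarith)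
      have : (v / (v + σ₁ ^ 2)) ^ 2 < 1 :=
        pow_lt_one₀ (div_pos hvar hd1).le hlt1 (by norm_num)
      calc κ * (v / (v + σ₁ ^ 2)) ^ 2 < κ * 1 := mul_lt_mul_of_pos_left this hkurt
        _ = κ := mul_one κ
  · intro r₁ r₂ hr₁ hr₁₂
    have hr₁0 : 0 < r₁ := lt_of_lt_of_le one_pos hr₁
    have hr₂0 : 0 < r₂ := hr₁0.trans hr₁₂
    have hinv : 1 / r₂ < 1 / r₁ := one_div_lt_one_div_of_lt hr₁0 hr₁₂
    have ha : 0 ≤ 1 - 1 / r₁ := by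
      have : 1 / r₁ ≤ 1 := by
        rw [div_le_one hr₁0]; exact hr₁
      linarith
    refine mul_lt_mul_of_pos_left ?_ hkurt
    exact pow_lt_pow_left₀ (by linarith) ha (by norm_num)
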